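/- arXiv:2406.02994 — 2 statements merged into one kernel-verified Lean document; each statement's English description precedes it below -/
import Mathlib

section
/- Let S = S₁ × ⋯ × Sₙ be a direct product of finite commutative antinegative semirings, each with its set of zero-divisors closed under addition. Then for a = (a₁,…,aₙ) and c = (c₁,…,cₙ) in Z(S) with a ≠ c, a and c are adjacent in Γ₁(S) if and only if there exists an index i with aᵢ ∈ Z(Sᵢ) and cᵢ ∈ Z(Sᵢ). -/
/-- `x` is a zero-divisor of the commutative semiring `S`. -/
def IsZD {S : Type*} [CommSemiring S] (x : S) : Prop :=
  ∃ y : S, y ≠ 0 ∧ x * y = 0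

/-- The total graph of a commutative semiring: distinct `x, y` are adjacent
iff `x + y` is a zero-divisor. -/
def totalGraph (S : Type*) [CommSemiring S] : SimpleGraph S where
  Adj x y := x ≠ y ∧ IsZD (x + y)
  symm := by
    constructor
    intro x y h
    exact ⟨h.1.symm, by rw [add_comm]; exact h.2⟩
  loopless := by constructor; intro x h; exact h.1 rfl

/-- The induced subgraph of the total graph on the set of zero-divisors. -/
def gamma1 (S : Type*) [CommSemiring S] : SimpleGraph {x : S // IsZD x} :=
  SimpleGraph.comap Subtype.val (totalGraph S)

/-- A resolving set: distinct vertices have distinct distance vectors to `W`. -/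
def IsResolving {V : Type*} (G : SimpleGraph V) (W : Set V) : Prop :=
  ∀ x y : V, (∀ w ∈ W, G.dist x w = G.dist y w) → x = y

/-- The metric dimension: the least cardinality of a resolving set. -/
noncomputable def metricDim {V : Type*} (G : SimpleGraph V) : ℕ :=
  sInf {k | ∃ W : Set V, W.Finite ∧ W.ncard = k ∧ IsResolving G W}

theorem stmt5 {n : ℕ} {S : Fin n → Type*} [∀ i, CommSemiring (S i)] [∀ i, Fintype (S i)]
    (anti : ∀ i, ∀ a b : S i, a + b = 0 → a = 0 ∧ b = 0)
    (closed : ∀ i, ∀ a b : S i, IsZD a → IsZD b → IsZD (a + b))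
    (a c : ∀ i, S i) (ha : IsZD a) (hc : IsZD c) (hne : a ≠ c) :
    (gamma1 (∀ i, S i)).Adj ⟨a, ha⟩ ⟨c, hc⟩ ↔ ∃ i, IsZD (a i) ∧ IsZD (c i) := by
  constructor
  · rintro ⟨hne', y, hy0, hxy⟩
    have hex : ∃ i, y i ≠ 0 := by
      by_contra h; push_neg at h; exact hy0 (funext h)
    obtain ⟨i, hyi⟩ := hex
    have hmul : (a i + c i) * y i = 0 := congrFun hxy i
    rw [add_mul] at hmul
    obtain ⟨h1, h2⟩ := anti i _ _ hmul
    exact ⟨i, ⟨y i, hyi, h1⟩, ⟨y i, hyi, h2⟩⟩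
  · rintro ⟨i, hai, hci⟩
    refine ⟨by simpa using hne, ?_⟩
    obtain ⟨w, hw0, hw⟩ := closed i _ _ hai hci
    refine ⟨Pi.single i w, ?_, ?_⟩
    · intro h
      apply hw0
      simpa using congrFun h i
    · funext j
      by_cases hj : j = i
      · subst hj; simpa using hw
      · simp [Pi.single_eq_of_ne hj]
end

section
/- Let S = S₁ × ⋯ × Sₙ (n ≥ 1) where each Sᵢ is a finite commutative antinegative semiring with Z(Sᵢ) closed under addition, and suppose Γ₁(S) is connected with at least two vertices. Then the metric dimension of Γ₁(S) satisfies dim(Γ₁(S)) ≥ |Z(S)| − 2ⁿ + 1. -/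
section Aux

lemma zd_pi_iff {n : ℕ} {S : Fin n → Type*} [∀ i, CommSemiring (S i)] (x : ∀ i, S i) :
    IsZD x ↔ ∃ i, IsZD (x i) := by
  constructor
  · rintro ⟨y, hy, hxy⟩
    obtain ⟨i, hi⟩ := Function.ne_iff.mp hy
    exact ⟨i, y i, hi, congrFun hxy i⟩
  · rintro ⟨i, c, hc, hxc⟩
    refine ⟨Pi.single i c, ?_, ?_⟩
    · intro h
      exact hc (by simpa using congrFun h i)
    · funext j
      rcases eq_or_ne j i with rfl | hj
      · simpa [Pi.single_eq_same] using hxc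
      · simp [Pi.single_eq_of_ne hj]

lemma zd_add_iff {T : Type*} [CommSemiring T]
    (anti : ∀ a b : T, a + b = 0 → a = 0 ∧ b = 0)
    (closed : ∀ a b : T, IsZD a → IsZD b → IsZD (a + b)) (a b : T) :
    IsZD (a + b) ↔ IsZD a ∧ IsZD b := by
  constructor
  · rintro ⟨c, hc, h⟩
    rw [add_mul] at h
    obtain ⟨h1, h2⟩ := anti _ _ h
    exact ⟨⟨c, hc, h1⟩, ⟨c, hc, h2⟩⟩
  · rintro ⟨ha, hb⟩
    exact closed a b ha hb

lemma dist_le_of_twin {V : Type*} (G : SimpleGraph V) (hconn : G.Connected) {x y : V}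
    (twin : ∀ z, z ≠ x → z ≠ y → (G.Adj z x ↔ G.Adj z y))
    {w : V} (hwy : w ≠ y) : G.dist x w ≤ G.dist y w := by
  obtain ⟨p, hp⟩ := hconn.exists_walk_length_eq_dist y w
  cases p with
  | nil => exact absurd rfl hwy.symm
  | @cons _ z _ h q =>
    rcases eq_or_ne x z with rfl | hzx
    · calc G.dist x w ≤ q.length := SimpleGraph.dist_le q
        _ ≤ G.dist y w := by simp at hp; omega
    · have hzy : z ≠ y := h.ne'
      have hadj : G.Adj x z := ((twin z (Ne.symm hzx) hzy).mpr h.symm).symm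
      calc G.dist x w ≤ (SimpleGraph.Walk.cons hadj q).length :=
            SimpleGraph.dist_le _
        _ = q.length + 1 := by simp
        _ = G.dist y w := by simp at hp; omega

lemma dist_eq_of_twin {V : Type*} (G : SimpleGraph V) (hconn : G.Connected) {x y : V}
    (twin : ∀ z, z ≠ x → z ≠ y → (G.Adj z x ↔ G.Adj z y))
    {w : V} (hwx : w ≠ x) (hwy : w ≠ y) : G.dist x w = G.dist y w :=
  le_antisymm (dist_le_of_twin G hconn twin hwy)
    (dist_le_of_twin G hconn (fun z h1 h2 => (twin z h2 h1).symm) hwx)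

end Aux

theorem stmt8 {n : ℕ} {S : Fin n → Type*} [∀ i, CommSemiring (S i)] [∀ i, Fintype (S i)]
    (anti : ∀ i, ∀ a b : S i, a + b = 0 → a = 0 ∧ b = 0)
    (closed : ∀ i, ∀ a b : S i, IsZD a → IsZD b → IsZD (a + b)) (hn : 1 ≤ n)
    (hconn : (gamma1 (∀ i, S i)).Connected)
    (hnt : 2 ≤ Nat.card {x : ∀ i, S i // IsZD x}) :
    (Nat.card {x : ∀ i, S i // IsZD x} : ℤ) - 2 ^ n + 1 ≤
      (metricDim (gamma1 (∀ i, S i)) : ℤ) := by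
  classical
  set V := {x : ∀ i, S i // IsZD x}
  set G := gamma1 (∀ i, S i)
  haveI : Finite V := Subtype.finite
  -- the defining set is nonempty (univ resolves)
  have hres : IsResolving G (Set.univ : Set V) := by
    intro x y h
    have := h x (Set.mem_univ x)
    rw [SimpleGraph.dist_self] at this
    exact ((hconn.dist_eq_zero_iff).mp this.symm).symm
  have hne : {k | ∃ W : Set V, W.Finite ∧ W.ncard = k ∧ IsResolving G W}.Nonempty :=
    ⟨(Set.univ : Set V).ncard, Set.univ, Set.toFinite _, rfl, hres⟩
  obtain ⟨W, hWfin, hWcard, hWres⟩ := Nat.sInf_mem hne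
  -- zero-divisor pattern map
  let f : V → (Fin n → Bool) := fun x i => decide (IsZD (x.val i))
  -- twin property ⇒ f is injective on Wᶜ
  have hinj : Set.InjOn f Wᶜ := by
    intro x hx y hy hfxy
    by_contra hxy
    have hpat : ∀ i, IsZD (x.val i) ↔ IsZD (y.val i) := by
      intro i
      have := congrFun hfxy i
      simpa [f, decide_eq_decide] using this
    have twin : ∀ z : V, z ≠ x → z ≠ y → (G.Adj z x ↔ G.Adj z y) := by
      intro z hzx hzy
      have hvx : z.val ≠ x.val := fun h => hzx (Subtype.ext h)
      have hvy : z.val ≠ y.val := fun h => hzy (Subtype.ext h)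
      have key : ∀ u : V, (∀ i, IsZD (u.val i) ↔ IsZD (y.val i)) → z.val ≠ u.val →
          (G.Adj z u ↔ ∃ i, IsZD (z.val i) ∧ IsZD (y.val i)) := by
        intro u hu hvu
        show (z.val ≠ u.val ∧ IsZD (z.val + u.val)) ↔ _
        rw [zd_pi_iff]
        constructor
        · rintro ⟨-, i, hi⟩
          have := (zd_add_iff (anti i) (closed i) _ _).mp hi
          exact ⟨i, this.1, (hu i).mp this.2⟩
        · rintro ⟨i, h1, h2⟩
          exact ⟨hvu, i, (zd_add_iff (anti i) (closed i) _ _).mpr ⟨h1, (hu i).mpr h2⟩⟩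
      rw [key x hpat hvx, key y (fun i => Iff.rfl) hvy]
    apply hxy
    apply hWres
    intro w hw
    exact dist_eq_of_twin G hconn twin
      (fun h => hx (h ▸ hw)) (fun h => hy (h ▸ hw))
  -- f maps Wᶜ into nonzero patterns
  have hmaps : ∀ x ∈ (Wᶜ : Set V), f x ∈ {p : Fin n → Bool | p ≠ fun _ => false} := by
    intro x _
    obtain ⟨i, hi⟩ := (zd_pi_iff x.val).mp x.property
    intro h
    have := congrFun h i
    simp [f, hi] at this
  have hcardBool : Nat.card (Fin n → Bool) = 2 ^ n := by
    simp [Nat.card_eq_fintype_card]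
  have hT : ({p : Fin n → Bool | p ≠ fun _ => false} : Set _).ncard = 2 ^ n - 1 := by
    have : ({p : Fin n → Bool | p ≠ fun _ => false} : Set _) =
        ({fun _ => false} : Set (Fin n → Bool))ᶜ := by
      ext p; simp
    rw [this]
    have h2 := Set.ncard_add_ncard_compl ({fun _ => false} : Set (Fin n → Bool))
      (Set.toFinite _) (Set.toFinite _)
    rw [Set.ncard_singleton, hcardBool] at h2
    omega
  have hle : (Wᶜ : Set V).ncard ≤ 2 ^ n - 1 := by
    rw [← hT]
    exact Set.ncard_le_ncard_of_injOn f hmaps hinj (Set.toFinite _)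
  have hsum := Set.ncard_add_ncard_compl W hWfin (Set.toFinite _)
  have hpow : 1 ≤ 2 ^ n := Nat.one_le_two_pow
  have hcast : ((2 ^ n : ℕ) : ℤ) = 2 ^ n := by push_cast; ring
  have hdim : metricDim G = W.ncard := hWcard.symm
  have hsum' : W.ncard + Wᶜ.ncard = Nat.card {x : ∀ i, S i // IsZD x} := hsum
  omega
end
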